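/- Let T > 0, a > 0, b ∈ ℝ, φ : [0,T) → ℝ continuous with φ(t) ≥ φ₀ > 0, and V : [0,T) → [0,∞) differentiable with V'(t) ≤ φ(t)·(-a·V(t)) + b·|d(t)| for a bounded measurable d : [0,T) → ℝ with lim_{t→T⁻} d(t) = 0. If ∫₀ᵗ φ(s) ds → ∞ as t → T⁻, then lim_{t→T⁻} V(t) = 0. -/

import Mathlib

open Filter Set

theorem stmt8 (T a b φ₀ M : ℝ) (hT : 0 < T) (ha : 0 < a) (hφ₀ : 0 < φ₀)
    (φ V V' d : ℝ → ℝ)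
    (hφcont : ContinuousOn φ (Set.Ico 0 T))
    (hφlb : ∀ t ∈ Set.Ico 0 T, φ₀ ≤ φ t)
    (hVnn : ∀ t ∈ Set.Ico 0 T, 0 ≤ V t)
    (hd : Measurable d) (hdbd : ∀ t ∈ Set.Ico 0 T, |d t| ≤ M)
    (hd0 : Tendsto d (nhdsWithin T (Set.Iio T)) (nhds 0))
    (hderiv : ∀ t ∈ Set.Ico 0 T, HasDerivAt V (V' t) t)
    (hineq : ∀ t ∈ Set.Ico 0 T, V' t ≤ φ t * (-a * V t) + b * |d t|)
    (hint : Tendsto (fun t => ∫ s in (0:ℝ)..t, φ s) (nhdsWithin T (Set.Iio T)) atTop) :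
    Tendsto V (nhdsWithin T (Set.Iio T)) (nhds 0) := by
  set Φ : ℝ → ℝ := fun t => ∫ s in (0:ℝ)..t, φ s with hΦdef
  -- derivative of Φ
  have hΦdiff : ∀ s ∈ Set.Ioo 0 T, HasDerivAt Φ (φ s) s := by
    intro s hs
    have hsub : Set.uIcc 0 s ⊆ Set.Ico 0 T := by
      rw [Set.uIcc_of_le hs.1.le]
      exact fun x hx => ⟨hx.1, lt_of_le_of_lt hx.2 hs.2⟩
    have hInt : IntervalIntegrable φ MeasureTheory.volume 0 s :=
      (hφcont.mono hsub).intervalIntegrable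
    have hnhds : Set.Ico 0 T ∈ nhds s := Ico_mem_nhds hs.1 hs.2
    have hca : ContinuousAt φ s := hφcont.continuousAt hnhds
    have hmeas : StronglyMeasurableAtFilter φ (nhds s) MeasureTheory.volume := by
      refine ⟨Set.Ioo 0 T, Ioo_mem_nhds hs.1 hs.2, ?_⟩
      exact ((hφcont.mono Set.Ioo_subset_Ico_self).aestronglyMeasurable measurableSet_Ioo)
    exact intervalIntegral.integral_hasDerivAt_right hInt hmeas hca
  rw [Metric.tendsto_nhds]
  intro ε hε
  -- choose δ
  set δ : ℝ := ε * a * φ₀ / (2 * (|b| + 1)) with hδdef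
  have hb1 : (0:ℝ) < |b| + 1 := by positivity
  have hδpos : 0 < δ := by positivity
  set K : ℝ := |b| * δ / (a * φ₀) with hKdef
  have hKnn : 0 ≤ K := by positivity
  have hKε : K < ε / 2 := by
    have hKeq : K = |b| * ε / (2 * (|b| + 1)) := by
      rw [hKdef, hδdef]; field_simp
    rw [hKeq, div_lt_iff₀ (by positivity)]
    nlinarith [abs_nonneg b, hε]
  have haK : a * φ₀ * K = |b| * δ := by
    rw [hKdef]; field_simp
  -- choose t₁ with |d| ≤ δ on Ioo t₁ T
  have hev : ∀ᶠ s in nhdsWithin T (Set.Iio T), |d s| ≤ δ := by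
    have := Metric.tendsto_nhds.mp hd0 δ hδpos
    filter_upwards [this] with s hs
    rw [Real.dist_eq, sub_zero] at hs
    exact hs.le
  obtain ⟨t₁, ht₁T, ht₁⟩ := (mem_nhdsLT_iff_exists_Ioo_subset' (show T - 1 < T by linarith)).mp hev
  set m : ℝ := max t₁ 0 with hmdef
  have hmT : m < T := max_lt ht₁T hT
  set t' : ℝ := (m + T) / 2 with ht'def
  have ht'0 : 0 < t' := by
    have : (0:ℝ) ≤ m := le_max_right _ _
    rw [ht'def]; linarith
  have hmt' : m < t' := by rw [ht'def]; linarith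
  have ht'T : t' < T := by rw [ht'def]; linarith
  have ht'mem : t' ∈ Set.Ico 0 T := ⟨ht'0.le, ht'T⟩
  set W : ℝ → ℝ := fun s => (V s - K) * Real.exp (a * Φ s) with hWdef
  -- W has nonpositive derivative on (t', T)
  have hWderiv : ∀ s ∈ Set.Ioo t' T, HasDerivAt W
      (V' s * Real.exp (a * Φ s) + (V s - K) * (Real.exp (a * Φ s) * (a * φ s))) s := by
    intro s hs
    have hs0T : s ∈ Set.Ioo 0 T := ⟨lt_trans ht'0 hs.1, hs.2⟩
    have h1 : HasDerivAt (fun u => V u - K) (V' s) s :=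
      (hderiv s ⟨hs0T.1.le, hs0T.2⟩).sub_const K
    have h2 : HasDerivAt (fun u => Real.exp (a * Φ u)) (Real.exp (a * Φ s) * (a * φ s)) s :=
      ((hΦdiff s hs0T).const_mul a).exp
    exact h1.mul h2
  have hWd_nonpos : ∀ s ∈ Set.Ioo t' T,
      V' s * Real.exp (a * Φ s) + (V s - K) * (Real.exp (a * Φ s) * (a * φ s)) ≤ 0 := by
    intro s hs
    have hs0T : s ∈ Set.Ico 0 T := ⟨(lt_trans ht'0 hs.1).le, hs.2⟩
    have hdδ : |d s| ≤ δ := ht₁ ⟨lt_of_le_of_lt (le_trans (le_max_left _ _) hmt'.le) hs.1, hs.2⟩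
    have hφs : φ₀ ≤ φ s := hφlb s hs0T
    have hE : 0 < Real.exp (a * Φ s) := Real.exp_pos _
    have hVs : 0 ≤ V s := hVnn s hs0T
    have hV's : V' s ≤ φ s * (-a * V s) + b * |d s| := hineq s hs0T
    have hbd : b * |d s| ≤ |b| * δ := by
      have h1 : b * |d s| ≤ |b| * |d s| :=
        mul_le_mul_of_nonneg_right (le_abs_self b) (abs_nonneg _)
      have h2 : |b| * |d s| ≤ |b| * δ := mul_le_mul_of_nonneg_left hdδ (abs_nonneg b)
      linarith
    have hKbound : |b| * δ ≤ a * φ s * K := by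
      rw [← haK]
      have : a * φ₀ ≤ a * φ s := mul_le_mul_of_nonneg_left hφs ha.le
      exact mul_le_mul_of_nonneg_right this hKnn
    have h1 : V' s * Real.exp (a * Φ s) ≤ (φ s * (-a * V s) + b * |d s|) * Real.exp (a * Φ s) :=
      mul_le_mul_of_nonneg_right hV's hE.le
    have key : (φ s * (-a * V s) + b * |d s|) * Real.exp (a * Φ s)
        + (V s - K) * (Real.exp (a * Φ s) * (a * φ s))
        = Real.exp (a * Φ s) * (b * |d s| - a * φ s * K) := by ring
    have h3 : Real.exp (a * Φ s) * (b * |d s| - a * φ s * K)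
        ≤ Real.exp (a * Φ s) * (|b| * δ - a * φ s * K) :=
      mul_le_mul_of_nonneg_left (by linarith) hE.le
    have h4 : Real.exp (a * Φ s) * (|b| * δ - a * φ s * K) ≤ 0 :=
      mul_nonpos_of_nonneg_of_nonpos hE.le (by linarith)
    linarith
  -- W is antitone on [t', t] for t < T
  have hVcont : ∀ s ∈ Set.Ico 0 T, ContinuousAt V s := fun s hs => (hderiv s hs).continuousAt
  have hWanti : ∀ t ∈ Set.Ioo t' T, W t ≤ W t' := by
    intro t ht
    have hsub : Set.Icc t' t ⊆ Set.Ico 0 T := fun x hx =>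
      ⟨le_trans ht'0.le hx.1, lt_of_le_of_lt hx.2 ht.2⟩
    have hintsub : interior (Set.Icc t' t) ⊆ Set.Ioo t' T := by
      rw [interior_Icc]
      exact fun x hx => ⟨hx.1, lt_trans hx.2 ht.2⟩
    have hcont : ContinuousOn W (Set.Icc t' t) := by
      apply ContinuousOn.mul
      · exact ContinuousOn.sub (fun x hx => (hVcont x (hsub hx)).continuousWithinAt)
          continuousOn_const
      · apply Continuous.comp_continuousOn Real.continuous_exp
        apply ContinuousOn.const_smul ?_ a
        -- continuity of Φ on Icc t' t
        intro x hx
        have hx0T : x ∈ Set.Ioo 0 T := ⟨lt_of_lt_of_le ht'0 hx.1, lt_of_le_of_lt hx.2 ht.2⟩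
        exact (hΦdiff x hx0T).continuousAt.continuousWithinAt
    have hdiff : DifferentiableOn ℝ W (interior (Set.Icc t' t)) := fun x hx =>
      ((hWderiv x (hintsub hx)).differentiableAt).differentiableWithinAt
    have hanti : AntitoneOn W (Set.Icc t' t) := by
      apply antitoneOn_of_deriv_nonpos (convex_Icc t' t) hcont hdiff
      intro x hx
      rw [(hWderiv x (hintsub hx)).deriv]
      exact hWd_nonpos x (hintsub hx)
    exact hanti ⟨le_refl t', ht.1.le⟩ ⟨ht.1.le, le_refl t⟩ ht.1.le
  -- exp(-aΦ) → 0
  have hexp0 : Tendsto (fun t => |W t'| * Real.exp (-(a * Φ t))) (nhdsWithin T (Set.Iio T)) (nhds 0) := by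
    have h1 : Tendsto (fun t => a * Φ t) (nhdsWithin T (Set.Iio T)) atTop :=
      (tendsto_const_mul_atTop_of_pos ha).mpr hint
    have h2 : Tendsto (fun t => -(a * Φ t)) (nhdsWithin T (Set.Iio T)) atBot :=
      tendsto_neg_atBot_iff.mpr h1
    have h3 := Real.tendsto_exp_atBot.comp h2
    have := h3.const_mul (|W t'|)
    simpa using this
  have hsmall : ∀ᶠ t in nhdsWithin T (Set.Iio T), |W t'| * Real.exp (-(a * Φ t)) < ε / 2 := by
    have := Metric.tendsto_nhds.mp hexp0 (ε/2) (by linarith)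
    filter_upwards [this] with t hts
    rw [Real.dist_eq, sub_zero] at hts
    exact lt_of_le_of_lt (le_abs_self _) hts
  have hmemIoo : ∀ᶠ t in nhdsWithin T (Set.Iio T), t ∈ Set.Ioo t' T := by
    rw [eventually_iff]
    exact (mem_nhdsLT_iff_exists_Ioo_subset' ht'T).mpr ⟨t', ht'T, fun x hx => hx⟩
  filter_upwards [hsmall, hmemIoo] with t htsmall htIoo
  rw [Real.dist_eq, sub_zero]
  have ht0T : t ∈ Set.Ico 0 T := ⟨(lt_trans ht'0 htIoo.1).le, htIoo.2⟩
  have hVt : 0 ≤ V t := hVnn t ht0T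
  rw [abs_of_nonneg hVt]
  have hW := hWanti t htIoo
  have hE : 0 < Real.exp (a * Φ t) := Real.exp_pos _
  have hVK : V t - K ≤ W t' * Real.exp (-(a * Φ t)) := by
    rw [Real.exp_neg]
    rw [hWdef] at hW
    calc V t - K = (V t - K) * Real.exp (a * Φ t) * (Real.exp (a * Φ t))⁻¹ := by
          field_simp
      _ ≤ W t' * (Real.exp (a * Φ t))⁻¹ := by
          apply mul_le_mul_of_nonneg_right hW (by positivity)
  have hWle : W t' * Real.exp (-(a * Φ t)) ≤ |W t'| * Real.exp (-(a * Φ t)) :=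
    mul_le_mul_of_nonneg_right (le_abs_self _) (Real.exp_pos _).le
  linarith
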